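/- Pull-back time-average of the logistic solution (Lemma 3.2, equation (3.5), pathwise form): Let w : ℝ → ℝ be continuous with w(0) = 0 and w(−t)/t → 0 as t → +∞, and let x > 0. Then lim_{t→∞} (1/(r·t))·log(1 + r·x·exp(rt − σ·w(−t))·∫_{−t}^{0} exp(rτ + σ·w(τ)) dτ) = 1. -/

import Mathlib

open Real Filter Topology intervalIntegral

/-- **Pull-back time-average of the logistic solution** (Lemma 3.2, equation (3.5),
pathwise form). If `w` is continuous with `w 0 = 0` and `w(-t)/t → 0`, then
`(1/(rt)) log(1 + r x e^{rt - σ w(-t)} ∫_{-t}^0 e^{rτ + σ w(τ)} dτ) → 1` as `t → ∞`,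
i.e. `(1/t) ∫₀ᵗ g(s, θ_{-t} w, x) ds → 1`. -/
theorem logistic_pullback_time_average
    (r σ x : ℝ) (hr : 0 < r) (hx : 0 < x)
    (w : ℝ → ℝ) (hw : Continuous w) (hw0 : w 0 = 0)
    (hwslow : Tendsto (fun t => w (-t) / t) atTop (𝓝 0)) :
    Tendsto (fun t : ℝ => (1 / (r * t)) *
        Real.log (1 + r * x * Real.exp (r * t - σ * w (-t)) *
          ∫ τ in (-t)..(0:ℝ), Real.exp (r * τ + σ * w τ)))
      atTop (𝓝 1) := by
  -- continuity of the integrand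
  have hcont : Continuous fun τ => Real.exp (r * τ + σ * w τ) :=
    ((continuous_const.mul continuous_id).add (continuous_const.mul hw)).rexp
  have hInt : ∀ a b : ℝ, IntervalIntegrable (fun τ => Real.exp (r * τ + σ * w τ))
      MeasureTheory.volume a b := fun a b => hcont.intervalIntegrable a b
  -- eventual bound on σ w(-s)
  have h1 : Tendsto (fun s => σ * (w (-s) / s)) atTop (𝓝 0) := by
    simpa using hwslow.const_mul σ
  have h2 : ∀ᶠ s in atTop, |σ * (w (-s) / s)| < r / 2 := by
    have := Metric.tendsto_nhds.1 h1 (r / 2) (by linarith)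
    filter_upwards [this] with s hs
    simpa only [Real.dist_eq, sub_zero] using hs
  obtain ⟨s₀, hs₀⟩ := eventually_atTop.1 h2
  set s₁ : ℝ := max s₀ 1 with hs₁def
  have hs₁1 : (1:ℝ) ≤ s₁ := le_max_right _ _
  have hs₁pos : (0:ℝ) < s₁ := lt_of_lt_of_le one_pos hs₁1
  have hkey : ∀ s ≥ s₁, |σ * w (-s)| ≤ r / 2 * s := by
    intro s hs
    have hspos : 0 < s := lt_of_lt_of_le hs₁pos hs
    have := hs₀ s (le_trans (le_max_left _ _) hs)
    have habs : |σ * (w (-s) / s)| = |σ * w (-s)| / s := by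
      rw [← mul_div_assoc, abs_div, abs_of_pos hspos]
    rw [habs, div_lt_iff₀ hspos] at this
    nlinarith
  -- bound on compact piece
  obtain ⟨M₁, hM₁⟩ := (isCompact_Icc (a := -s₁) (b := (0:ℝ))).exists_bound_of_continuousOn
    ((continuous_const.mul hw : Continuous fun τ : ℝ => σ * w τ)).continuousOn
  set M : ℝ := max M₁ 0 with hMdef
  have hM0 : 0 ≤ M := le_max_right _ _
  have hbound : ∀ τ ≤ (0:ℝ), σ * w τ ≤ -(r / 2) * τ + M := by
    intro τ hτ
    rcases le_total (-s₁) τ with h | h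
    · have h1' : σ * w τ ≤ M₁ := le_trans (le_abs_self _)
        (by simpa only [Real.norm_eq_abs, Pi.mul_apply] using hM₁ τ ⟨h, hτ⟩)
      have h2' : 0 ≤ -(r / 2) * τ := by nlinarith
      have : M₁ ≤ M := le_max_left _ _
      linarith
    · have hs : s₁ ≤ -τ := by linarith
      have := hkey (-τ) hs
      rw [neg_neg] at this
      have := le_trans (le_abs_self _) this
      nlinarith
  -- integrand global bound on (-∞, 0]
  have hib : ∀ τ ≤ (0:ℝ), Real.exp (r * τ + σ * w τ) ≤ Real.exp M := by
    intro τ hτ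
    apply Real.exp_le_exp.2
    have := hbound τ hτ
    nlinarith
  -- lower constant
  set c : ℝ := ∫ τ in (-1:ℝ)..0, Real.exp (r * τ + σ * w τ) with hcdef
  have hc : 0 < c :=
    intervalIntegral.intervalIntegral_pos_of_pos (hInt (-1) 0)
      (fun u => Real.exp_pos _) (by norm_num)
  -- helper limits
  have hrt : Tendsto (fun t : ℝ => r * t) atTop atTop :=
    tendsto_id.const_mul_atTop hr
  have hinv : Tendsto (fun t : ℝ => (r * t)⁻¹) atTop (𝓝 0) :=
    hrt.inv_tendsto_atTop
  have hlogdiv : Tendsto (fun t : ℝ => Real.log t * (r * t)⁻¹) atTop (𝓝 0) := by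
    have h := Real.isLittleO_log_id_atTop.tendsto_div_nhds_zero
    have h2 : Tendsto (fun t : ℝ => r⁻¹ * (Real.log t / t)) atTop (𝓝 (r⁻¹ * 0)) :=
      h.const_mul _
    rw [mul_zero] at h2
    refine h2.congr fun t => ?_
    rw [mul_inv]
    ring
  have hwr : Tendsto (fun t : ℝ => σ / r * (w (-t) / t)) atTop (𝓝 0) := by
    simpa using hwslow.const_mul (σ / r)
  -- lower and upper comparison functions
  set K₁ : ℝ := Real.log (r * x * c) with hK₁def
  set K₂ : ℝ := Real.log (1 + r * x * Real.exp M) with hK₂def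
  have hrne : r ≠ 0 := ne_of_gt hr
  have hliml : Tendsto (fun t : ℝ => (1 / (r * t)) * (K₁ + (r * t - σ * w (-t))))
      atTop (𝓝 1) := by
    have h : Tendsto (fun t : ℝ => K₁ * (r * t)⁻¹ + (1 - σ / r * (w (-t) / t)))
        atTop (𝓝 (K₁ * 0 + (1 - 0))) :=
      ((hinv.const_mul K₁)).add (tendsto_const_nhds.sub hwr)
    rw [mul_zero, sub_zero, zero_add] at h
    apply h.congr'
    filter_upwards [eventually_gt_atTop 0] with t ht
    have htne : t ≠ 0 := ne_of_gt ht
    field_simp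
    try ring
  have hlimu : Tendsto (fun t : ℝ =>
      (1 / (r * t)) * ((r * t - σ * w (-t)) + Real.log t + K₂)) atTop (𝓝 1) := by
    have h : Tendsto (fun t : ℝ =>
        (1 - σ / r * (w (-t) / t)) + Real.log t * (r * t)⁻¹ + K₂ * (r * t)⁻¹)
        atTop (𝓝 ((1 - 0) + 0 + K₂ * 0)) :=
      ((tendsto_const_nhds.sub hwr).add hlogdiv).add (hinv.const_mul K₂)
    rw [mul_zero, sub_zero, add_zero, add_zero] at h
    apply h.congr'
    filter_upwards [eventually_gt_atTop 0] with t ht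
    have htne : t ≠ 0 := ne_of_gt ht
    field_simp
    try ring
  -- squeeze
  refine tendsto_of_tendsto_of_tendsto_of_le_of_le' hliml hlimu ?_ ?_
  all_goals
    filter_upwards [eventually_ge_atTop s₁] with t ht
  -- common facts
  all_goals
    have ht1 : (1:ℝ) ≤ t := le_trans hs₁1 ht
    have htpos : (0:ℝ) < t := lt_of_lt_of_le one_pos ht1
    have hrtpos : 0 < r * t := mul_pos hr htpos
    have hApos : 0 ≤ r * t - σ * w (-t) := by
      have := le_trans (le_abs_self _) (hkey t ht)
      nlinarith
    have hIlb : c ≤ ∫ τ in (-t)..(0:ℝ), Real.exp (r * τ + σ * w τ) := by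
      have hsplit := intervalIntegral.integral_add_adjacent_intervals
        (hInt (-t) (-1)) (hInt (-1) 0)
      have hnn : 0 ≤ ∫ τ in (-t)..(-1:ℝ), Real.exp (r * τ + σ * w τ) :=
        intervalIntegral.integral_nonneg (by linarith) (fun u _ => (Real.exp_pos _).le)
      rw [← hsplit]
      linarith
    have hFpos : 0 < 1 + r * x * Real.exp (r * t - σ * w (-t)) *
        ∫ τ in (-t)..(0:ℝ), Real.exp (r * τ + σ * w τ) := by
      have hp : 0 < r * x * Real.exp (r * t - σ * w (-t)) *
          ∫ τ in (-t)..(0:ℝ), Real.exp (r * τ + σ * w τ) :=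
        mul_pos (mul_pos (mul_pos hr hx) (Real.exp_pos _)) (lt_of_lt_of_le hc hIlb)
      linarith
  · -- lower bound
    have hlow : r * x * c * Real.exp (r * t - σ * w (-t)) ≤
        1 + r * x * Real.exp (r * t - σ * w (-t)) *
          ∫ τ in (-t)..(0:ℝ), Real.exp (r * τ + σ * w τ) := by
      have hrx : 0 < r * x := mul_pos hr hx
      have he : 0 < Real.exp (r * t - σ * w (-t)) := Real.exp_pos _
      have h2' : r * x * Real.exp (r * t - σ * w (-t)) * c ≤
          r * x * Real.exp (r * t - σ * w (-t)) *
            ∫ τ in (-t)..(0:ℝ), Real.exp (r * τ + σ * w τ) :=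
        mul_le_mul_of_nonneg_left hIlb (by positivity)
      nlinarith
    have hloglow : K₁ + (r * t - σ * w (-t)) ≤
        Real.log (1 + r * x * Real.exp (r * t - σ * w (-t)) *
          ∫ τ in (-t)..(0:ℝ), Real.exp (r * τ + σ * w τ)) := by
      have hpos : 0 < r * x * c := by positivity
      have := Real.log_le_log (by positivity) hlow
      rwa [Real.log_mul (ne_of_gt hpos) (ne_of_gt (Real.exp_pos _)),
        Real.log_exp] at this
    have h1rt : 0 ≤ 1 / (r * t) := by positivity
    exact mul_le_mul_of_nonneg_left hloglow h1rt
  · -- upper bound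
    have hIub : (∫ τ in (-t)..(0:ℝ), Real.exp (r * τ + σ * w τ)) ≤ Real.exp M * t := by
      have hb := intervalIntegral.norm_integral_le_of_norm_le_const
        (C := Real.exp M) (a := -t) (b := (0:ℝ))
        (f := fun τ => Real.exp (r * τ + σ * w τ)) ?_
      · have := le_trans (le_abs_self _) hb
        rwa [show |(0:ℝ) - -t| = t by rw [abs_of_nonneg] <;> linarith] at this
      · intro u hu
        rw [Set.uIoc_of_le (by linarith : -t ≤ (0:ℝ))] at hu
        rw [Real.norm_eq_abs, Real.abs_exp]
        exact hib u hu.2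
    have hup : 1 + r * x * Real.exp (r * t - σ * w (-t)) *
          ∫ τ in (-t)..(0:ℝ), Real.exp (r * τ + σ * w τ) ≤
        Real.exp (r * t - σ * w (-t)) * t * (1 + r * x * Real.exp M) := by
      have he1 : 1 ≤ Real.exp (r * t - σ * w (-t)) := Real.one_le_exp hApos
      have hrx : 0 < r * x := mul_pos hr hx
      have h1' : 1 ≤ Real.exp (r * t - σ * w (-t)) * t := by nlinarith
      have h2' : r * x * Real.exp (r * t - σ * w (-t)) *
            (∫ τ in (-t)..(0:ℝ), Real.exp (r * τ + σ * w τ)) ≤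
          r * x * Real.exp (r * t - σ * w (-t)) * (Real.exp M * t) :=
        mul_le_mul_of_nonneg_left hIub (by positivity)
      nlinarith
    have hlogup : Real.log (1 + r * x * Real.exp (r * t - σ * w (-t)) *
          ∫ τ in (-t)..(0:ℝ), Real.exp (r * τ + σ * w τ)) ≤
        (r * t - σ * w (-t)) + Real.log t + K₂ := by
      have h := Real.log_le_log hFpos hup
      rw [Real.log_mul (by positivity) (by positivity),
        Real.log_mul (ne_of_gt (Real.exp_pos _)) (ne_of_gt htpos),
        Real.log_exp] at h
      linarith
    have h1rt : 0 ≤ 1 / (r * t) := by positivity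
    exact mul_le_mul_of_nonneg_left hlogup h1rt
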